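/- If Q is a quiver whose underlying graph is a tree (no parallel arrows, no 2-cycles, and the undirected support graph is acyclic and connected), then for any vertex v, the quiver obtained from Q by mutating at v has the same underlying undirected graph as Q up to reversing the arrows incident to v, provided v is a sink or a source. In particular, any orientation of a tree can be transformed into any other orientation of the same tree by a sequence of mutations at sinks or sources. -/

import Mathlib

open Matrix

def mutate {n : Type*} [DecidableEq n] (B : Matrix n n ℤ) (k : n) : Matrix n n ℤ :=
  Matrix.of fun i j =>
    if i = k ∨ j = k then -B i j
    else B i j + Int.sign (B i k) * max (B i k * B k j) 0

def underlying {V : Type*} (B : Matrix V V ℤ) : SimpleGraph V :=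
  SimpleGraph.fromRel fun i j => B i j ≠ 0

section ChainWalk
variable {V : Type*}

lemma TQM_walk_of_chain {G : SimpleGraph V} (f : ℕ → V) (hf : ∀ n, G.Adj (f n) (f (n+1))) :
    ∀ (d a : ℕ), ∃ w : G.Walk (f a) (f (a + d)), w.length = d ∧
      w.support = (List.range (d+1)).map (fun t => f (a + t)) := by
  intro d
  induction d with
  | zero => intro a; exact ⟨(SimpleGraph.Walk.nil).copy rfl (by rw [Nat.add_zero]),
      by simp [List.range_succ]⟩
  | succ d ih =>
    intro a
    obtain ⟨w, hl, hs⟩ := ih (a+1)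
    refine ⟨SimpleGraph.Walk.cons (hf a) (w.copy rfl (by rw [show a+1+d = a+(d+1) from by omega])),
      by simp [hl], ?_⟩
    rw [SimpleGraph.Walk.support_cons, SimpleGraph.Walk.support_copy, hs]
    conv_rhs => rw [List.range_succ_eq_map]
    simp only [List.map_cons, List.map_map]
    congr 1
    apply List.map_congr_left
    intro t _
    simp only [Function.comp_apply]
    congr 1
    omega

end ChainWalk

namespace TQM
set_option linter.unusedSectionVars false
variable {V : Type*} [Fintype V] [DecidableEq V]

/-- pointwise skew-symmetry plus sign agreement with a reference matrix `B` -/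
def Inv (B M : Matrix V V ℤ) : Prop :=
  (∀ i j, M j i = -M i j) ∧ ∀ i j, M i j = B i j ∨ M i j = -B i j

/-- `k` is a sink or a source of `M` -/
def SS (M : Matrix V V ℤ) (k : V) : Prop := (∀ i, 0 ≤ M i k) ∨ (∀ i, M i k ≤ 0)

/-- every mutation in the list happens at a sink or source -/
def Good (B : Matrix V V ℤ) (l : List V) : Prop :=
  ∀ pre k post, l = pre ++ k :: post → SS (pre.foldl mutate B) k

lemma good_nil (B : Matrix V V ℤ) : Good B [] := by
  intro pre k post h
  exact absurd h.symm (by simp)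

lemma good_cons {B : Matrix V V ℤ} {k : V} {l : List V} (h1 : SS B k)
    (h2 : Good (mutate B k) l) : Good B (k :: l) := by
  rintro pre k' post hpre
  cases pre with
  | nil =>
    simp only [List.nil_append, List.cons.injEq] at hpre
    obtain ⟨rfl, rfl⟩ := hpre
    simpa using h1
  | cons a pre' =>
    simp only [List.cons_append, List.cons.injEq] at hpre
    obtain ⟨rfl, hpre⟩ := hpre
    simpa using h2 pre' k' post hpre

lemma good_append {B : Matrix V V ℤ} {l1 l2 : List V} (h1 : Good B l1)
    (h2 : Good (l1.foldl mutate B) l2) : Good B (l1 ++ l2) := by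
  intro pre k post hpre
  rw [List.append_eq_append_iff] at hpre
  rcases hpre with ⟨a', rfl, ha⟩ | ⟨c', hl1, hc⟩
  · have := h2 a' k post ha
    simpa [List.foldl_append] using this
  · cases c' with
    | nil =>
      rw [List.append_nil] at hl1
      subst hl1
      have := h2 [] k post (by simpa using hc.symm)
      simpa using this
    | cons x c'' =>
      simp only [List.cons_append, List.cons.injEq] at hc
      obtain ⟨rfl, _⟩ := hc
      subst hl1
      exact h1 pre k c'' rfl

lemma mutate_eq {M : Matrix V V ℤ} (hsk : ∀ i j, M j i = -M i j) {v : V} (h : SS M v)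
    (i j : V) : mutate M v i j = if i = v ∨ j = v then -M i j else M i j := by
  unfold mutate
  by_cases hc : i = v ∨ j = v
  · simp [hc]
  · simp only [of_apply, if_neg hc]
    have hmax : max (M i v * M v j) 0 = 0 := by
      rcases h with h | h
      · refine max_eq_right (mul_nonpos_iff.mpr (Or.inl ⟨h i, ?_⟩))
        have h1 := hsk j v
        have h2 := h j
        omega
      · refine max_eq_right (mul_nonpos_iff.mpr (Or.inr ⟨h i, ?_⟩))
        have h1 := hsk j v
        have h2 := h j
        omega
    rw [hmax]
    ring

lemma inv_mutate {B M : Matrix V V ℤ} (hM : Inv B M) {v : V} (h : SS M v) :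
    Inv B (mutate M v) := by
  obtain ⟨hsk, hpm⟩ := hM
  constructor
  · intro i j
    rw [mutate_eq hsk h, mutate_eq hsk h]
    by_cases hc : i = v ∨ j = v
    · rw [if_pos hc, if_pos (Or.symm hc), hsk i j]
    · rw [if_neg hc, if_neg (fun h' => hc (Or.symm h')), hsk i j]
  · intro i j
    rw [mutate_eq hsk h]
    rcases hpm i j with h' | h' <;> by_cases hc : i = v ∨ j = v <;>
      simp [hc, h']

lemma adj_underlying' {B : Matrix V V ℤ} (hsk : ∀ i j, B j i = -B i j) {i j : V} :
    (underlying B).Adj i j ↔ B i j ≠ 0 := by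
  unfold underlying
  rw [SimpleGraph.fromRel_adj]
  constructor
  · rintro ⟨hne, h | h⟩
    · exact h
    · rw [hsk i j] at h
      simpa using h
  · intro h
    refine ⟨?_, Or.inl h⟩
    rintro rfl
    have := hsk i i
    omega

lemma exists_source {B M : Matrix V V ℤ} (hskB : ∀ i j, B j i = -B i j)
    (hacyc : (underlying B).IsAcyclic) (hM : Inv B M) {S : Finset V} (hS : S.Nonempty) :
    ∃ u ∈ S, ∀ v ∈ S, M v u ≤ 0 := by
  classical
  by_contra hcon
  push_neg at hcon
  have hstep : ∀ u : {x // x ∈ S}, ∃ v : {x // x ∈ S}, 0 < M v.1 u.1 := by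
    intro u
    obtain ⟨v, hv1, hv2⟩ := hcon u.1 u.2
    exact ⟨⟨v, hv1⟩, hv2⟩
  choose F hF using hstep
  obtain ⟨u0, hu0⟩ := hS
  let f : ℕ → V := fun n => (F^[n] ⟨u0, hu0⟩ : {x // x ∈ S}).1
  have hchain : ∀ n, 0 < M (f (n+1)) (f n) := by
    intro n
    show 0 < M (F^[n+1] ⟨u0,hu0⟩).1 (F^[n] ⟨u0,hu0⟩).1
    rw [Function.iterate_succ_apply']
    exact hF _
  have hadj : ∀ n, (underlying B).Adj (f n) (f (n+1)) := by
    intro n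
    have hMne : M (f (n+1)) (f n) ≠ 0 := by have := hchain n; omega
    have hB : B (f (n+1)) (f n) ≠ 0 := by
      rcases hM.2 (f (n+1)) (f n) with h | h <;> intro h0 <;> rw [h0] at h <;> simp [h] at hMne
    exact ((adj_underlying' hskB).mpr hB).symm
  obtain ⟨i, j, hne, heq⟩ := Finite.exists_ne_map_eq_of_infinite f
  set i0 := min i j with hi0
  set j0 := max i j with hj0
  have hij : i0 < j0 := by rcases Nat.lt_or_ge i j with h | h <;> simp [hi0, hj0] <;> omega
  have heq0 : f i0 = f j0 := by
    rcases Nat.lt_or_ge i j with h | h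
    · rw [hi0, hj0, min_eq_left h.le, max_eq_right h.le]; exact heq
    · rw [hi0, hj0, min_eq_right h, max_eq_left h]; exact heq.symm
  have hQ : ∃ d, 0 < d ∧ ∃ t, t < d ∧ f (i0 + t) = f (i0 + d) := by
    refine ⟨j0 - i0, by omega, 0, by omega, ?_⟩
    rw [Nat.add_zero, show i0 + (j0 - i0) = j0 from by omega]
    exact heq0
  set d := Nat.find hQ with hddef
  obtain ⟨hd0, t, htd, hteq⟩ := Nat.find_spec hQ
  have hdist : ∀ p q, p < q → q < d → f (i0+p) ≠ f (i0+q) := by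
    intro p q hpq hqd heq'
    exact Nat.find_min hQ hqd ⟨by omega, p, hpq, heq'⟩
  rcases Nat.lt_or_ge (d - t) 3 with hm | hm
  · rcases Nat.lt_or_ge (d - t) 2 with hm1 | hm2
    · have h1 := hchain (i0+t)
      rw [show i0+t+1 = i0+d from by omega, ← hteq] at h1
      have := hM.1 (f (i0+t)) (f (i0+t))
      omega
    · have h1 := hchain (i0+t)
      have h2 := hchain (i0+t+1)
      rw [show i0+t+1+1 = i0+d from by omega, ← hteq] at h2
      have := hM.1 (f (i0+t+1)) (f (i0+t))
      omega
  · obtain ⟨w, hwl, hws⟩ := TQM_walk_of_chain f hadj (d - t - 1) (i0+t+1)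
    have hend : f (i0+t+1+(d-t-1)) = f (i0+t) := by
      rw [show i0+t+1+(d-t-1) = i0 + d from by omega, ← hteq]
    have hpath : (w.copy rfl hend).IsPath := by
      rw [SimpleGraph.Walk.isPath_def]
      rw [SimpleGraph.Walk.support_copy, hws]
      refine List.Nodup.map_on ?_ List.nodup_range
      intro s1 h1 s2 h2 hfeq
      rw [List.mem_range] at h1 h2
      by_contra hne'
      rcases Nat.lt_or_ge s1 s2 with hlt | hge
      · rcases Nat.lt_or_ge (t+1+s2) d with hq | hq
        · exact hdist (t+1+s1) (t+1+s2) (by omega) hq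
            (by rw [show i0+(t+1+s1) = i0+t+1+s1 from by omega,
                    show i0+(t+1+s2) = i0+t+1+s2 from by omega]; exact hfeq)
        · have : f (i0+t+1+s1) = f (i0+t) := by
            rw [hfeq, show i0+t+1+s2 = i0+d from by omega, ← hteq]
          exact hdist t (t+1+s1) (by omega) (by omega)
            (by rw [show i0+(t+1+s1) = i0+t+1+s1 from by omega]; exact this.symm)
      · have hlt : s2 < s1 := by omega
        rcases Nat.lt_or_ge (t+1+s1) d with hq | hq
        · exact hdist (t+1+s2) (t+1+s1) (by omega) hq
            (by rw [show i0+(t+1+s2) = i0+t+1+s2 from by omega,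
                    show i0+(t+1+s1) = i0+t+1+s1 from by omega]; exact hfeq.symm)
        · have : f (i0+t+1+s2) = f (i0+t) := by
            rw [← hfeq, show i0+t+1+s1 = i0+d from by omega, ← hteq]
          exact hdist t (t+1+s2) (by omega) (by omega)
            (by rw [show i0+(t+1+s2) = i0+t+1+s2 from by omega]; exact this.symm)
    have hadj1 : (underlying B).Adj (f (i0+t+1)) (f (i0+t)) := (hadj (i0+t)).symm
    have hacyc' := SimpleGraph.isAcyclic_iff_path_unique.mp hacyc
    have hpe := hacyc' (⟨w.copy rfl hend, hpath⟩ : (underlying B).Path _ _)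
      (SimpleGraph.Path.singleton hadj1)
    have hlen1 : (w.copy rfl hend).length = d - t - 1 := by
      rw [SimpleGraph.Walk.length_copy, hwl]
    have hlen2 : (w.copy rfl hend).length = 1 := by
      have hwe := Subtype.ext_iff.mp hpe
      have := congrArg SimpleGraph.Walk.length hwe
      simpa [SimpleGraph.Path.singleton] using this
    omega

lemma flip {B : Matrix V V ℤ} (hskB : ∀ i j, B j i = -B i j)
    (hacyc : (underlying B).IsAcyclic) :
    ∀ (n : ℕ) (S : Finset V), S.card ≤ n → ∀ M : Matrix V V ℤ, Inv B M →
    (∀ u ∈ S, ∀ v, v ∉ S → 0 ≤ M u v) →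
    ∃ l : List V, Good M l ∧ ∀ i j,
      (l.foldl mutate M) i j = if ((i ∈ S) ↔ (j ∈ S)) then M i j else -M i j := by
  intro n
  induction n with
  | zero =>
    intro S hcard M hM hbd
    have hSe : S = ∅ := Finset.card_eq_zero.mp (Nat.le_antisymm hcard (Nat.zero_le _))
    subst hSe
    exact ⟨[], good_nil _, fun i j => by simp⟩
  | succ n ih =>
    intro S hcard M hM hbd
    rcases S.eq_empty_or_nonempty with rfl | hS
    · exact ⟨[], good_nil _, fun i j => by simp⟩
    obtain ⟨u, huS, hsrc⟩ := exists_source hskB hacyc hM hS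
    have hsrc' : ∀ v, M v u ≤ 0 := by
      intro v
      by_cases hv : v ∈ S
      · exact hsrc v hv
      · have h1 := hbd u huS v hv
        have h2 := hM.1 v u
        omega
    have hss : SS M u := Or.inr hsrc'
    have hmeq := mutate_eq hM.1 hss
    have hM1 : Inv B (mutate M u) := inv_mutate hM hss
    have hbd1 : ∀ u' ∈ S.erase u, ∀ v, v ∉ S.erase u → 0 ≤ (mutate M u) u' v := by
      intro u' hu' v hv
      rw [Finset.mem_erase] at hu'
      obtain ⟨hne, hu'S⟩ := hu'
      rw [hmeq]
      by_cases hvu : v = u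
      · subst hvu
        rw [if_pos (Or.inr rfl)]
        have := hsrc u' hu'S
        omega
      · have hvS : v ∉ S := fun h => hv (Finset.mem_erase.mpr ⟨hvu, h⟩)
        rw [if_neg (by tauto)]
        exact hbd u' hu'S v hvS
    have hcard1 : (S.erase u).card ≤ n := by
      have h1 := Finset.card_erase_of_mem huS
      have h2 := Finset.card_pos.mpr hS
      omega
    obtain ⟨l, hgood, hres⟩ := ih (S.erase u) hcard1 (mutate M u) hM1 hbd1
    refine ⟨u :: l, good_cons hss hgood, ?_⟩
    intro i j
    rw [List.foldl_cons, hres i j]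
    have h0 : M u u = 0 := by have := hM.1 u u; omega
    rw [hmeq i j]
    by_cases hi : i = u <;> by_cases hj : j = u
    · rw [if_pos (Or.inl hi)]
      have hie : i ∉ S.erase u := by rw [hi]; exact Finset.notMem_erase u S
      have hje : j ∉ S.erase u := by rw [hj]; exact Finset.notMem_erase u S
      rw [if_pos (iff_of_false hie hje),
        if_pos (iff_of_true (by rw [hi]; exact huS) (by rw [hj]; exact huS))]
      rw [hi, hj, h0]
      simp
    · rw [if_pos (Or.inl hi)]
      have hie : i ∉ S.erase u := by rw [hi]; exact Finset.notMem_erase u S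
      have hiS2 : i ∈ S := by rw [hi]; exact huS
      by_cases hjS : j ∈ S
      · have hje : j ∈ S.erase u := Finset.mem_erase.mpr ⟨hj, hjS⟩
        rw [if_neg (fun h => hie (h.mpr hje)), if_pos (iff_of_true hiS2 hjS)]
        simp
      · have hje : j ∉ S.erase u := fun h => hjS (Finset.mem_erase.mp h).2
        rw [if_pos (iff_of_false hie hje), if_neg (fun h => hjS (h.mp hiS2))]
    · rw [if_pos (Or.inr hj)]
      have hje : j ∉ S.erase u := by rw [hj]; exact Finset.notMem_erase u S
      have hjS2 : j ∈ S := by rw [hj]; exact huS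
      by_cases hiS : i ∈ S
      · have hie : i ∈ S.erase u := Finset.mem_erase.mpr ⟨hi, hiS⟩
        rw [if_neg (fun h => hje (h.mp hie)), if_pos (iff_of_true hiS hjS2)]
        simp
      · have hie : i ∉ S.erase u := fun h => hiS (Finset.mem_erase.mp h).2
        rw [if_pos (iff_of_false hie hje), if_neg (fun h => hiS (h.mpr hjS2))]
    · rw [if_neg (show ¬(i = u ∨ j = u) from fun h => h.elim hi hj)]
      have hiff : (i ∈ S.erase u ↔ j ∈ S.erase u) ↔ (i ∈ S ↔ j ∈ S) := by
        rw [Finset.mem_erase, Finset.mem_erase]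
        constructor
        · intro h
          constructor
          · intro hiS; exact (h.mp ⟨hi, hiS⟩).2
          · intro hjS; exact (h.mpr ⟨hj, hjS⟩).2
        · intro h
          constructor
          · rintro ⟨-, hiS⟩; exact ⟨hj, h.mp hiS⟩
          · rintro ⟨-, hjS⟩; exact ⟨hi, h.mpr hjS⟩
      by_cases hC : (i ∈ S ↔ j ∈ S)
      · rw [if_pos (hiff.mpr hC), if_pos hC]
      · rw [if_neg (fun h => hC (hiff.mp h)), if_neg hC]

lemma reach {B B' : Matrix V V ℤ} (hskB : ∀ i j, B j i = -B i j)
    (hacyc : (underlying B).IsAcyclic) (hB' : Inv B B') :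
    ∀ (n : ℕ) (M : Matrix V V ℤ), Inv B M →
    (Finset.univ.filter (fun p : V × V => M p.1 p.2 ≠ B' p.1 p.2)).card ≤ n →
    ∃ l : List V, Good M l ∧ l.foldl mutate M = B' := by
  intro n
  induction n with
  | zero =>
    intro M hM hcard
    have heq : ∀ i j, M i j = B' i j := by
      intro i j
      by_contra hne
      have hmem : ((i,j) : V × V) ∈
          Finset.univ.filter (fun p : V × V => M p.1 p.2 ≠ B' p.1 p.2) := by
        simp [hne]
      have := Finset.card_pos.mpr ⟨_, hmem⟩
      omega
    exact ⟨[], good_nil _, by ext i j; exact heq i j⟩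
  | succ n ih =>
    intro M hM hcard
    by_cases hMB' : M = B'
    · exact ⟨[], good_nil _, hMB'⟩
    have hW : ∃ a b, M a b ≠ B' a b ∧ 0 < M a b := by
      have hex : ∃ a b, M a b ≠ B' a b := by
        by_contra h
        push_neg at h
        exact hMB' (by ext i j; exact h i j)
      obtain ⟨a, b, hab⟩ := hex
      have hMab : M a b ≠ 0 := by
        intro h0
        have hB0 : B a b = 0 := by rcases hM.2 a b with h | h <;> rw [h0] at h <;> omega
        have hB'0 : B' a b = 0 := by rcases hB'.2 a b with h' | h' <;> omega
        exact hab (by omega)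
      rcases hMab.lt_or_gt with hneg | hpos
      · refine ⟨b, a, ?_, ?_⟩
        · intro h
          have h1 := hM.1 a b
          have h2 := hB'.1 a b
          apply hab
          omega
        · have h1 := hM.1 a b
          omega
      · exact ⟨a, b, hab, hpos⟩
    obtain ⟨a, b, hab, hpos⟩ := hW
    classical
    have hBab : B a b ≠ 0 := by
      have hMab : M a b ≠ 0 := by omega
      rcases hM.2 a b with h | h <;> intro h0 <;> rw [h0] at h <;> simp [h] at hMab
    have hadjab : (underlying B).Adj a b := (adj_underlying' hskB).mpr hBab
    set G' := (underlying B).deleteEdges {s(a,b)} with hG'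
    set S : Finset V := Finset.univ.filter (fun w => G'.Reachable a w) with hSdef
    have hmemS : ∀ w, w ∈ S ↔ G'.Reachable a w := fun w => by simp [hSdef]
    have haS : a ∈ S := (hmemS a).mpr (SimpleGraph.Reachable.refl a)
    have hbS : b ∉ S := by
      intro hb
      obtain ⟨p⟩ := (hmemS b).mp hb
      have hsub : ∀ e ∈ (p.toPath : G'.Walk a b).edges, e ∈ (underlying B).edgeSet := by
        intro e he
        have h1 := SimpleGraph.Walk.edges_subset_edgeSet _ he
        exact SimpleGraph.edgeSet_mono (SimpleGraph.deleteEdges_le _) h1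
      have hq : ((p.toPath : G'.Walk a b).transfer (underlying B) hsub).IsPath :=
        SimpleGraph.Walk.IsPath.transfer hsub p.toPath.2
      have hpe := (SimpleGraph.isAcyclic_iff_path_unique.mp hacyc)
        (⟨(p.toPath : G'.Walk a b).transfer (underlying B) hsub, hq⟩ : (underlying B).Path a b)
        (SimpleGraph.Path.singleton hadjab)
      have hmem : s(a,b) ∈ ((p.toPath : G'.Walk a b).transfer (underlying B) hsub).edges := by
        have hwe : ((p.toPath : G'.Walk a b).transfer (underlying B) hsub)
            = ((SimpleGraph.Path.singleton hadjab : (underlying B).Path a b) :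
                (underlying B).Walk a b) := Subtype.ext_iff.mp hpe
        rw [hwe]
        exact SimpleGraph.Path.mk'_mem_edges_singleton hadjab
      rw [SimpleGraph.Walk.edges_transfer] at hmem
      have hG'adj := SimpleGraph.Walk.edges_subset_edgeSet _ hmem
      rw [SimpleGraph.mem_edgeSet] at hG'adj
      rw [hG', SimpleGraph.deleteEdges_adj] at hG'adj
      exact hG'adj.2 (by simp)
    have hSclosed : ∀ u ∈ S, ∀ v, G'.Adj u v → v ∈ S := by
      intro u hu v huv
      exact (hmemS v).mpr (((hmemS u).mp hu).trans huv.reachable)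
    have hcross : ∀ u, u ∈ S → ∀ v, v ∉ S → (underlying B).Adj u v → u = a ∧ v = b := by
      intro u hu v hv huv
      by_cases he : s(u,v) = s(a,b)
      · rw [Sym2.eq_iff] at he
        rcases he with ⟨rfl, rfl⟩ | ⟨rfl, rfl⟩
        · exact ⟨rfl, rfl⟩
        · exact absurd hu hbS
      · exfalso
        apply hv
        apply hSclosed u hu v
        rw [hG', SimpleGraph.deleteEdges_adj]
        exact ⟨huv, by simpa using he⟩
    have hMadj : ∀ u v, M u v ≠ 0 → (underlying B).Adj u v := by
      intro u v h
      have hBuv : B u v ≠ 0 := by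
        rcases hM.2 u v with h' | h' <;> intro h0 <;> rw [h0] at h' <;> simp [h'] at h
      exact (adj_underlying' hskB).mpr hBuv
    have hbd : ∀ u ∈ S, ∀ v, v ∉ S → 0 ≤ M u v := by
      intro u hu v hv
      by_cases h0 : M u v = 0
      · omega
      · obtain ⟨rfl, rfl⟩ := hcross u hu v hv (hMadj u v h0)
        omega
    obtain ⟨l1, hg1, hres⟩ := flip hskB hacyc S.card S le_rfl M hM hbd
    have h1 : M a b = -B' a b := by
      rcases hM.2 a b with h | h <;> rcases hB'.2 a b with h' | h' <;> omega
    have hM2e : ∀ i j, (l1.foldl mutate M) i j =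
        if ((i ∈ S) ↔ (j ∈ S)) then M i j else -M i j := hres
    set M2 := l1.foldl mutate M with hM2
    have hM2inv : Inv B M2 := by
      constructor
      · intro i j
        rw [hM2e i j, hM2e j i]
        by_cases hi : i ∈ S <;> by_cases hj : j ∈ S <;> simp [hi, hj, hM.1 i j]
      · intro i j
        rw [hM2e i j]
        rcases hM.2 i j with h | h <;> by_cases hc : ((i ∈ S) ↔ (j ∈ S)) <;> simp [hc, h]
    have hM2ab : M2 a b = B' a b := by
      rw [hM2e a b, if_neg (by simp [haS, hbS])]
      omega
    have hM2ba : M2 b a = B' b a := by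
      rw [hM2e b a, if_neg (by simp [haS, hbS])]
      have h2 := hM.1 a b
      have h3 := hB'.1 a b
      omega
    have hM2other : ∀ i j, (i,j) ≠ ((a,b) : V × V) → (i,j) ≠ ((b,a) : V × V) → M2 i j = M i j := by
      intro i j hij1 hij2
      rw [hM2e i j]
      by_cases hc : ((i ∈ S) ↔ (j ∈ S))
      · rw [if_pos hc]
      · rw [if_neg hc]
        have h0 : M i j = 0 := by
          by_contra h0
          by_cases hi : i ∈ S
          · have hj : j ∉ S := fun hj => hc ⟨fun _ => hj, fun _ => hi⟩
            obtain ⟨rfl, rfl⟩ := hcross i hi j hj (hMadj i j h0)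
            exact hij1 rfl
          · have hj : j ∈ S := by tauto
            have h0' : M j i ≠ 0 := by have := hM.1 i j; omega
            obtain ⟨rfl, rfl⟩ := hcross j hj i hi (hMadj j i h0')
            exact hij2 rfl
        omega
    have hsub : (Finset.univ.filter (fun p : V × V => M2 p.1 p.2 ≠ B' p.1 p.2)) ⊆
        (Finset.univ.filter (fun p : V × V => M p.1 p.2 ≠ B' p.1 p.2)).erase ((a,b) : V × V) := by
      intro p hp
      rw [Finset.mem_filter] at hp
      obtain ⟨-, hp⟩ := hp
      obtain ⟨i, j⟩ := p
      rw [Finset.mem_erase, Finset.mem_filter]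
      by_cases hij1 : (i,j) = ((a,b) : V × V)
      · exfalso
        rw [Prod.ext_iff] at hij1
        obtain ⟨h1', h2'⟩ := hij1
        subst h1'; subst h2'
        exact hp hM2ab
      · by_cases hij2 : (i,j) = ((b,a) : V × V)
        · exfalso
          rw [Prod.ext_iff] at hij2
          obtain ⟨h1', h2'⟩ := hij2
          subst h1'; subst h2'
          exact hp hM2ba
        · refine ⟨hij1, Finset.mem_univ _, ?_⟩
          rw [← hM2other i j hij1 hij2]
          exact hp
    have hcard2 : (Finset.univ.filter (fun p : V × V => M2 p.1 p.2 ≠ B' p.1 p.2)).card ≤ n := by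
      have hmem1 : ((a,b) : V × V) ∈
          Finset.univ.filter (fun p : V × V => M p.1 p.2 ≠ B' p.1 p.2) := by simp [hab]
      have h2 := Finset.card_le_card hsub
      have h3 := Finset.card_erase_of_mem hmem1
      have h4 := Finset.card_pos.mpr ⟨_, hmem1⟩
      omega
    obtain ⟨l2, hg2, hend⟩ := ih M2 hM2inv hcard2
    refine ⟨l1 ++ l2, good_append hg1 (by rw [← hM2]; exact hg2), ?_⟩
    rw [List.foldl_append, ← hM2]
    exact hend

end TQM

theorem tree_quiver_mutation {V : Type*} [Fintype V] [DecidableEq V]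
    (B : Matrix V V ℤ) (hskew : Bᵀ = -B)
    (hsimple : ∀ i j, B i j ∈ ({-1, 0, 1} : Set ℤ))
    (htree : (underlying B).IsTree) :
    (∀ v : V, ((∀ i, 0 ≤ B i v) ∨ (∀ i, B i v ≤ 0)) →
      underlying (mutate B v) = underlying B ∧
      ∀ i j, mutate B v i j = if i = v ∨ j = v then -B i j else B i j) ∧
    (∀ B' : Matrix V V ℤ, B'ᵀ = -B' →
      (∀ i j, B' i j ∈ ({-1, 0, 1} : Set ℤ)) →
      underlying B' = underlying B →
      ∃ l : List V, l.foldl mutate B = B' ∧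
        ∀ (pre : List V) (k : V) (post : List V), l = pre ++ k :: post →
          ((∀ i, 0 ≤ (pre.foldl mutate B) i k) ∨ (∀ i, (pre.foldl mutate B) i k ≤ 0))) := by
  have hskB : ∀ i j, B j i = -B i j := by
    intro i j
    have := congrFun (congrFun hskew j) i
    simp only [Matrix.transpose_apply, Matrix.neg_apply] at this
    omega
  constructor
  · intro v hv
    have hm := TQM.mutate_eq hskB hv
    refine ⟨?_, hm⟩
    have hne0 : ∀ i j, mutate B v i j ≠ 0 ↔ B i j ≠ 0 := by
      intro i j
      rw [hm i j]
      by_cases hc : i = v ∨ j = v <;> simp [hc]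
    ext i j
    simp only [underlying, SimpleGraph.fromRel_adj, hne0]
  · intro B' hskew' hsimple' hund
    have hskB' : ∀ i j, B' j i = -B' i j := by
      intro i j
      have := congrFun (congrFun hskew' j) i
      simp only [Matrix.transpose_apply, Matrix.neg_apply] at this
      omega
    have hB'inv : TQM.Inv B B' := by
      refine ⟨hskB', ?_⟩
      intro i j
      have h1 : B i j = -1 ∨ B i j = 0 ∨ B i j = 1 := by
        have := hsimple i j; simpa using this
      have h2 : B' i j = -1 ∨ B' i j = 0 ∨ B' i j = 1 := by
        have := hsimple' i j; simpa using this
      have h3 : B' i j ≠ 0 ↔ B i j ≠ 0 := by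
        have hA : (underlying B').Adj i j ↔ (underlying B).Adj i j := by rw [hund]
        rw [TQM.adj_underlying' hskB', TQM.adj_underlying' hskB] at hA
        exact hA
      omega
    have hBinv : TQM.Inv B B := ⟨hskB, fun i j => Or.inl rfl⟩
    obtain ⟨l, hgood, hfold⟩ := TQM.reach hskB htree.2 hB'inv _ B hBinv le_rfl
    exact ⟨l, hfold, hgood⟩
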